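/- Let X, Y be Scott domains and let (d_i ⇒ e_i), i ∈ I, be a finite family of step functions with d_i finite in X and e_i finite in Y. The supremum ⋁_{i∈I}(d_i ⇒ e_i) exists in the pointwise-ordered space of Scott-continuous functions [X → Y] if and only if for every J ⊆ I, the family {e_j | j ∈ J} has an upper bound in Y whenever {d_j | j ∈ J} has an upper bound in X. -/
import Mathlib


def ScottOpen {X : Type*} [Preorder X] (U : Set X) : Prop :=
  (∀ ⦃x y : X⦄, x ≤ y → x ∈ U → y ∈ U) ∧
  ∀ D : Set X, D.Nonempty → DirectedOn (· ≤ ·) D →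
    ∀ a : X, IsLUB D a → a ∈ U → (D ∩ U).Nonempty

def IsDcpo (X : Type*) [Preorder X] : Prop :=
  ∀ D : Set X, D.Nonempty → DirectedOn (· ≤ ·) D → ∃ a : X, IsLUB D a

def IsFiniteElt {X : Type*} [Preorder X] (d : X) : Prop :=
  ∀ D : Set X, D.Nonempty → DirectedOn (· ≤ ·) D →
    ∀ a : X, IsLUB D a → d ≤ a → ∃ e ∈ D, d ≤ e

def IsAlgebraicDcpo (X : Type*) [Preorder X] : Prop :=
  ∀ x : X, DirectedOn (· ≤ ·) {d : X | IsFiniteElt d ∧ d ≤ x} ∧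
    IsLUB {d : X | IsFiniteElt d ∧ d ≤ x} x

def BoundedComplete (X : Type*) [Preorder X] : Prop :=
  ∀ a b : X, (∃ c : X, a ≤ c ∧ b ≤ c) → ∃ s : X, IsLUB {a, b} s

def scottTop (X : Type*) [Preorder X] : TopologicalSpace X where
  IsOpen := ScottOpen
  isOpen_univ := ⟨fun _ _ _ h => h, fun D hD _ _ _ _ => by
    obtain ⟨d, hd⟩ := hD; exact ⟨d, hd, trivial⟩⟩
  isOpen_inter := fun U V hU hV => by
    constructor
    · intro x y hxy hx; exact ⟨hU.1 hxy hx.1, hV.1 hxy hx.2⟩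
    · intro D hne hdir a ha haUV
      obtain ⟨u, huD, huU⟩ := hU.2 D hne hdir a ha haUV.1
      obtain ⟨v, hvD, hvV⟩ := hV.2 D hne hdir a ha haUV.2
      obtain ⟨w, hwD, huw, hvw⟩ := hdir u huD v hvD
      exact ⟨w, hwD, hU.1 huw huU, hV.1 hvw hvV⟩
  isOpen_sUnion := fun S hS => by
    constructor
    · intro x y hxy hx
      obtain ⟨U, hUS, hxU⟩ := hx
      exact ⟨U, hUS, (hS U hUS).1 hxy hxU⟩
    · intro D hne hdir a ha haS
      obtain ⟨U, hUS, haU⟩ := haS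
      obtain ⟨d, hdD, hdU⟩ := (hS U hUS).2 D hne hdir a ha haU
      exact ⟨d, hdD, U, hUS, hdU⟩

def ScottSaturated {X : Type*} [Preorder X] (S : Set X) : Prop :=
  S = ⋂₀ {U : Set X | ScottOpen U ∧ S ⊆ U}

def Saturated {X : Type*} [TopologicalSpace X] (S : Set X) : Prop :=
  S = ⋂₀ {U : Set X | IsOpen U ∧ S ⊆ U}

def ScottCont' {X Y : Type*} [Preorder X] [Preorder Y] (f : X → Y) : Prop :=
  Monotone f ∧ ∀ D : Set X, D.Nonempty → DirectedOn (· ≤ ·) D →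
    ∀ a : X, IsLUB D a → IsLUB (f '' D) (f a)

def ContMap (X Y : Type*) [Preorder X] [Preorder Y] := {f : X → Y // ScottCont' f}

instance {X Y : Type*} [Preorder X] [Preorder Y] : Preorder (ContMap X Y) :=
  Preorder.lift Subtype.val

open Classical in
noncomputable def stepFun {X Y : Type*} [Preorder X] [Preorder Y] [OrderBot Y]
    (d : X) (e : Y) : X → Y :=
  fun x => if d ≤ x then e else ⊥

lemma bc_finset_lub {Y : Type*} [PartialOrder Y] [OrderBot Y]
    (hYb : BoundedComplete Y) (S : Finset Y) (h : ∃ c, ∀ y ∈ S, y ≤ c) :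
    ∃ m, IsLUB (↑S : Set Y) m := by
  classical
  induction S using Finset.induction_on with
  | empty => exact ⟨⊥, by simpa using isLUB_empty⟩
  | @insert a s hna ih =>
    obtain ⟨c, hc⟩ := h
    obtain ⟨b, hb⟩ := ih ⟨c, fun y hy => hc y (Finset.mem_insert_of_mem hy)⟩
    obtain ⟨m, hm⟩ := hYb a b ⟨c, hc a (Finset.mem_insert_self a s),
      hb.2 (fun y hy => hc y (Finset.mem_insert_of_mem hy))⟩
    refine ⟨m, ?_, ?_⟩
    · intro y hy
      rcases Finset.mem_insert.mp hy with rfl | hy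
      · exact hm.1 (by left; rfl)
      · exact le_trans (hb.1 hy) (hm.1 (by right; rfl))
    · intro u hu
      refine hm.2 ?_
      rintro y (rfl | rfl)
      · exact hu (by simp)
      · exact hb.2 fun z hz => hu (by simp [hz])

lemma stepFun_cont {X Y : Type*} [PartialOrder X] [PartialOrder Y] [OrderBot Y]
    {d : X} {e : Y} (hd : IsFiniteElt d) : ScottCont' (stepFun d e) := by
  constructor
  · intro x y hxy
    unfold stepFun
    split
    · rw [if_pos (le_trans (by assumption) hxy)]
    · exact bot_le
  · intro D hne hdir a ha
    by_cases h : d ≤ a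
    · obtain ⟨x, hxD, hdx⟩ := hd D hne hdir a ha h
      have hfa : stepFun d e a = e := if_pos h
      rw [hfa]
      constructor
      · rintro _ ⟨y, hyD, rfl⟩
        unfold stepFun; split
        · exact le_rfl
        · exact bot_le
      · intro u hu
        have : stepFun d e x = e := if_pos hdx
        exact this ▸ hu ⟨x, hxD, rfl⟩
    · have hfa : stepFun d e a = ⊥ := if_neg h
      rw [hfa]
      constructor
      · rintro _ ⟨y, hyD, rfl⟩
        have : ¬ d ≤ y := fun hdy => h (le_trans hdy (ha.1 hyD))
        simp [stepFun, this]
      · intro u _; exact bot_le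

/-- A finite family of step functions between Scott domains has a
supremum in the function space iff for every subfamily, the `e_j` have an upper
bound whenever the `d_j` do. -/
theorem sup_of_step_functions_exists_iff
    {X Y : Type*} [PartialOrder X] [OrderBot X] [PartialOrder Y] [OrderBot Y]
    (hXd : IsDcpo X) (hXa : IsAlgebraicDcpo X) (hXb : BoundedComplete X)
    (hYd : IsDcpo Y) (hYa : IsAlgebraicDcpo Y) (hYb : BoundedComplete Y)
    {ι : Type*} [Fintype ι] (d : ι → X) (e : ι → Y)
    (hd : ∀ i, IsFiniteElt (d i)) (he : ∀ i, IsFiniteElt (e i)) :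
    (∃ s : ContMap X Y,
        IsLUB {g : ContMap X Y | ∃ i : ι, g.1 = stepFun (d i) (e i)} s) ↔
    (∀ J : Finset ι, (∃ u : X, ∀ j ∈ J, d j ≤ u) → ∃ v : Y, ∀ j ∈ J, e j ≤ v) := by
  classical
  constructor
  · rintro ⟨s, hs⟩ J ⟨u, hu⟩
    refine ⟨s.1 u, fun j hj => ?_⟩
    have hmem : (⟨stepFun (d j) (e j), stepFun_cont (hd j)⟩ : ContMap X Y) ∈
        {g : ContMap X Y | ∃ i : ι, g.1 = stepFun (d i) (e i)} := ⟨j, rfl⟩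
    have hle := hs.1 hmem
    have := hle u
    simpa [stepFun, hu j hj] using this
  · intro hcons
    -- the pointwise sup exists
    have hm : ∀ x : X, ∃ m : Y, IsLUB {y : Y | ∃ i, d i ≤ x ∧ y = e i} m := by
      intro x
      obtain ⟨v, hv⟩ := hcons (Finset.univ.filter (fun i => d i ≤ x))
        ⟨x, fun j hj => (Finset.mem_filter.mp hj).2⟩
      have heq : {y : Y | ∃ i, d i ≤ x ∧ y = e i} =
          ↑((Finset.univ.filter (fun i => d i ≤ x)).image e) := by
        ext y
        simp only [Finset.coe_image, Set.mem_image, Finset.mem_coe,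
          Finset.mem_filter, Finset.mem_univ, true_and, Set.mem_setOf_eq]
        constructor
        · rintro ⟨i, hi, rfl⟩; exact ⟨i, hi, rfl⟩
        · rintro ⟨i, hi, rfl⟩; exact ⟨i, hi, rfl⟩
      rw [heq]
      refine bc_finset_lub hYb _ ⟨v, ?_⟩
      intro y hy
      simp only [Finset.mem_image, Finset.mem_filter, Finset.mem_univ, true_and] at hy
      obtain ⟨i, hi, rfl⟩ := hy
      exact hv i (by simp [hi])
    choose s hsl using hm
    have hmono : Monotone s := by
      intro x y hxy
      refine (hsl x).2 fun z hz => (hsl y).1 ?_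
      obtain ⟨i, hi, rfl⟩ := hz
      exact ⟨i, le_trans hi hxy, rfl⟩
    have hcont : ScottCont' s := by
      refine ⟨hmono, ?_⟩
      intro D hne hdir a ha
      constructor
      · rintro _ ⟨y, hyD, rfl⟩
        exact hmono (ha.1 hyD)
      · intro u hu
        refine (hsl a).2 ?_
        rintro _ ⟨i, hia, rfl⟩
        obtain ⟨x, hxD, hdx⟩ := hd i D hne hdir a ha hia
        have h1 : e i ≤ s x := (hsl x).1 ⟨i, hdx, rfl⟩
        exact le_trans h1 (hu ⟨x, hxD, rfl⟩)
    refine ⟨⟨s, hcont⟩, ?_, ?_⟩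
    · rintro g ⟨i, hg⟩
      intro x
      show g.1 x ≤ s x
      rw [hg]
      unfold stepFun
      split
      · exact (hsl x).1 ⟨i, by assumption, rfl⟩
      · exact bot_le
    · intro t ht
      intro x
      show s x ≤ t.1 x
      refine (hsl x).2 ?_
      rintro _ ⟨i, hix, rfl⟩
      have hmem : (⟨stepFun (d i) (e i), stepFun_cont (hd i)⟩ : ContMap X Y) ∈
          {g : ContMap X Y | ∃ i : ι, g.1 = stepFun (d i) (e i)} := ⟨i, rfl⟩
      have := ht hmem x
      simpa [stepFun, hix] using this
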